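/- In any undirected graph, the family of odd cycles (cycles with an odd number of edges) is uncrossable: if C₁ and C₂ are odd cycles and P₂ is a path in C₂ sharing only its endpoints v, w with C₁, then one of the two v-w-paths forming C₁ can be chosen as P₁ so that P₁ + P₂ is an odd cycle and (C₁ − P₁) + (C₂ − P₂) contains an odd cycle. -/

import Mathlib

open Finset

variable {V : Type*} [DecidableEq V]

/-- The edge set of a (simple) cycle in `G`. -/
def IsCycleEdges (G : SimpleGraph V) (s : Finset (Sym2 V)) : Prop :=
  ∃ (u : V) (c : G.Walk u u), c.IsCycle ∧ c.edges.toFinset = s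

/-- The edge set of a (simple) path from `v` to `w` in `G`. -/
def IsPathEdges (G : SimpleGraph V) (v w : V) (s : Finset (Sym2 V)) : Prop :=
  ∃ p : G.Walk v w, p.IsPath ∧ p.edges.toFinset = s

/-- The set of vertices covered by an edge set. -/
def edgeVerts (s : Finset (Sym2 V)) : Set V := {x | ∃ e ∈ s, x ∈ e}

/-- A family of cycles (given by their edge sets) is uncrossable:
for `C₁, C₂` in the family and a `v`-`w`-path `P₂` contained in `C₂` sharing only its
endpoints `v, w` with `C₁`, there is a `v`-`w`-path `P₁` contained in `C₁` such that
`P₁ + P₂` belongs to the family and `(C₁ - P₁) + (C₂ - P₂)` contains a member of the family. -/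
def Uncrossable (G : SimpleGraph V) (𝒞 : Set (Finset (Sym2 V))) : Prop :=
  ∀ C₁ ∈ 𝒞, ∀ C₂ ∈ 𝒞, ∀ v w : V, v ≠ w → ∀ P₂ : Finset (Sym2 V),
    IsPathEdges G v w P₂ → P₂ ⊆ C₂ →
    edgeVerts P₂ ∩ edgeVerts C₁ ⊆ {v, w} →
    v ∈ edgeVerts C₁ → w ∈ edgeVerts C₁ →
    ∃ P₁ : Finset (Sym2 V), IsPathEdges G v w P₁ ∧ P₁ ⊆ C₁ ∧
      (P₁ ∪ P₂) ∈ 𝒞 ∧ ∃ C ∈ 𝒞, C ⊆ (C₁ \ P₁) ∪ (C₂ \ P₂)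


section Aux
open SimpleGraph Walk
set_option linter.unusedSectionVars false

variable {G : SimpleGraph V}

lemma aux_mem_edge_of_mem_support {u z : V} (p : G.Walk u z) (hn : ¬ p.Nil)
    {x : V} (hx : x ∈ p.support) : ∃ e ∈ p.edges, x ∈ e := by
  induction p with
  | nil => simp at hn
  | cons h q ih =>
    rename_i a b c
    rw [support_cons, List.mem_cons] at hx
    rcases hx with rfl | hx
    · exact ⟨s(x,b), by simp, by simp⟩
    · by_cases hq : q.Nil
      · cases q with
        | nil =>
          simp only [support_nil, List.mem_singleton] at hx
          subst hx
          exact ⟨s(a,x), by simp, by simp⟩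
        | cons h' q' => exact absurd hq Walk.not_nil_cons
      · obtain ⟨e, he, hxe⟩ := ih hq hx
        exact ⟨e, by simp [he], hxe⟩

lemma aux_mem_support_of_mem_edge {u z x : V} (p : G.Walk u z) {e : Sym2 V}
    (he : e ∈ p.edges) (hx : x ∈ e) : x ∈ p.support := by
  induction e with
  | _ a b =>
    rw [Sym2.mem_iff] at hx
    rcases hx with rfl | rfl
    · exact p.fst_mem_support_of_mem_edges he
    · exact p.snd_mem_support_of_mem_edges he

lemma aux_takeUntil_start {x y : V} (c : G.Walk x y) (h : x ∈ c.support) :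
    c.takeUntil x h = Walk.nil := by
  cases c with
  | nil => rfl
  | cons r c => simp [takeUntil]

lemma aux_first_edge {u z x : V} (p : G.Walk u z) (hp : p.IsPath)
    (he : s(u, x) ∈ p.edges) : ∃ (h : G.Adj u x) (q : G.Walk x z), p = Walk.cons h q := by
  cases p with
  | nil => simp at he
  | cons h q =>
    rename_i b
    rw [edges_cons, List.mem_cons] at he
    rcases he with he | he
    · rw [Sym2.eq_iff] at he
      rcases he with ⟨-, rfl⟩ | ⟨h1, h2⟩
      · exact ⟨h, q, rfl⟩
      · exact absurd h1 h.ne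
    · exfalso
      have hu : u ∈ q.support := q.fst_mem_support_of_mem_edges he
      have := hp.support_nodup
      rw [support_cons] at this
      exact (List.nodup_cons.mp this).1 hu

lemma aux_sub_path {x w y : V} (p : G.Walk x w) (c : G.Walk x y) (hp : p.IsPath)
    (hc : c.IsPath) (hsub : ∀ e ∈ p.edges, e ∈ c.edges) :
    ∃ (h : w ∈ c.support), p = c.takeUntil w h := by
  induction p generalizing y with
  | nil => exact ⟨c.start_mem_support, (aux_takeUntil_start c _).symm⟩
  | cons h q ih =>
    rename_i a b d
    obtain ⟨h', c', rfl⟩ := aux_first_edge c hc (hsub s(a,b) (by simp))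
    have hqc' : ∀ e ∈ q.edges, e ∈ c'.edges := by
      intro e hee
      have : e ∈ (Walk.cons h' c').edges := hsub e (by simp [hee])
      rw [edges_cons, List.mem_cons] at this
      rcases this with rfl | h2
      · exfalso
        have := hp.edges_nodup
        rw [edges_cons, List.nodup_cons] at this
        exact this.1 hee
      · exact h2
    obtain ⟨hw, rfl⟩ := ih c' hp.of_cons hc.of_cons hqc'
    have hne : a ≠ d := by
      rintro rfl
      have := hp.support_nodup
      rw [support_cons, List.nodup_cons] at this
      exact this.1 (Walk.end_mem_support _)
    refine ⟨by simp [hw], ?_⟩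
    simp only [takeUntil, dif_neg hne]

lemma aux_arc {v w : V} (c : G.Walk v v) (hc : c.IsCycle) (p : G.Walk v w) (hp : p.IsPath)
    (hw : w ≠ v) (hsub : ∀ e ∈ p.edges, e ∈ c.edges) :
    ∃ r : G.Walk w v, r.IsPath ∧ (p.edges ++ r.edges).Perm c.edges := by
  cases c with
  | nil => exact absurd rfl hc.ne_nil
  | cons h d =>
    rename_i x
    rw [Walk.cons_isCycle_iff] at hc
    obtain ⟨hd, hvx⟩ := hc
    cases p with
    | nil => exact absurd rfl hw
    | cons h₂ q =>
      rename_i z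
      have hvq : v ∉ q.support := by
        have := hp.support_nodup
        rw [support_cons, List.nodup_cons] at this
        exact this.1
      have hfe : s(v,z) ∈ (Walk.cons h d).edges := hsub _ (by simp)
      rw [edges_cons, List.mem_cons] at hfe
      have hq : q.IsPath := hp.of_cons
      have hsq : ∀ e ∈ q.edges, e ∈ (Walk.cons h d).edges := fun e he => hsub e (by simp [he])
      have hzq : s(v,z) ∉ q.edges := by
        have := hp.edges_nodup
        rw [edges_cons, List.nodup_cons] at this
        exact this.1
      by_cases hcase : s(v,z) = s(v,x)
      · have hzx : z = x := by
          rw [Sym2.eq_iff] at hcase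
          rcases hcase with ⟨-, h1⟩ | ⟨h1, -⟩
          · exact h1
          · exact absurd h1 h.ne
        subst hzx
        have hqd : ∀ e ∈ q.edges, e ∈ d.edges := by
          intro e he
          have := hsq e he
          rw [edges_cons, List.mem_cons] at this
          rcases this with rfl | h2
          · exact absurd (hcase ▸ he) hzq
          · exact h2
        obtain ⟨hwd, rfl⟩ := aux_sub_path q d hq hd hqd
        refine ⟨d.dropUntil w hwd, hd.dropUntil hwd, ?_⟩
        have hspec := congrArg Walk.edges (d.take_spec hwd)
        rw [edges_append] at hspec
        rw [edges_cons, edges_cons, ← hspec]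
        exact (List.perm_cons _).mpr (List.Perm.refl _) |>.trans (List.Perm.refl _)
      · have hzd : s(v,z) ∈ d.reverse.edges := by
          rw [edges_reverse, List.mem_reverse]
          rcases hfe with h1 | h1
          · exact absurd h1 hcase
          · exact h1
        obtain ⟨h₃, e, hrev⟩ := aux_first_edge d.reverse hd.reverse hzd
        have he : e.IsPath := by
          have := hd.reverse
          rw [hrev] at this
          exact this.of_cons
        have hqe : ∀ e' ∈ q.edges, e' ∈ e.edges := by
          intro e' he'
          have h1 := hsq e' he'
          rw [edges_cons, List.mem_cons] at h1
          rcases h1 with rfl | h1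
          · exact absurd (q.fst_mem_support_of_mem_edges he') hvq
          · rw [← List.mem_reverse, ← edges_reverse, hrev, edges_cons, List.mem_cons] at h1
            rcases h1 with h1 | h1
            · exact (hzq (h1 ▸ he')).elim
            · exact h1
        obtain ⟨hwe, rfl⟩ := aux_sub_path q e hq he hqe
        have hvdrop : v ∉ ((e.dropUntil w hwe).reverse).support := by
          rw [support_reverse, List.mem_reverse]
          intro hmem
          have h1 : v ∈ e.support := e.support_dropUntil_subset hwe hmem
          have h2 : v ∈ d.reverse.support.tail := by
            rw [hrev, support_cons, List.tail_cons]; exact h1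
          have := hd.reverse.support_nodup
          rw [hrev, support_cons, List.nodup_cons] at this
          exact this.1 (by rw [hrev, support_cons, List.tail_cons] at h2; exact h2)
        refine ⟨(Walk.cons h ((e.dropUntil w hwe).reverse)).reverse,
          (((he.dropUntil hwe).reverse).cons hvdrop).reverse, ?_⟩
        rw [← Multiset.coe_eq_coe]
        have hde : (d.edges : Multiset (Sym2 V)) = s(v,z) ::ₘ (e.edges : Multiset (Sym2 V)) := by
          have : d.reverse.edges = s(v,z) :: e.edges := by rw [hrev, edges_cons]
          calc (d.edges : Multiset (Sym2 V)) = (d.reverse.edges : Multiset (Sym2 V)) := by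
                rw [edges_reverse, Multiset.coe_reverse]
            _ = _ := by rw [this]; rfl
        have hee := congrArg Walk.edges (e.take_spec hwe)
        rw [edges_append] at hee
        simp only [edges_cons, edges_reverse, List.reverse_cons, ← Multiset.cons_coe,
          Multiset.coe_reverse, ← Multiset.coe_add, hde, ← hee]
        simp only [← Multiset.singleton_add, Multiset.coe_nil, add_zero]
        abel

lemma aux_arcs {v w : V} (k : G.Walk v v) (hk : k.IsCycle) (hw : w ∈ k.support) (hwv : w ≠ v) :
    ∃ (A : G.Walk v w) (B : G.Walk w v), A.IsPath ∧ B.IsPath ∧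
      (A.edges ++ B.edges).Perm k.edges := by
  cases k with
  | nil => exact absurd rfl hk.ne_nil
  | cons h d =>
    rename_i x
    have hk' := hk
    rw [Walk.cons_isCycle_iff] at hk'
    obtain ⟨hd, hvx⟩ := hk'
    have hwd : w ∈ d.support := by
      rw [support_cons, List.mem_cons] at hw
      rcases hw with rfl | hw
      · exact absurd rfl hwv
      · exact hw
    have hB : (d.dropUntil w hwd).IsPath := hd.dropUntil hwd
    have hsub : ∀ e ∈ (d.dropUntil w hwd).reverse.edges, e ∈ (Walk.cons h d).edges := by
      intro e he
      rw [edges_reverse, List.mem_reverse] at he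
      rw [edges_cons]
      exact List.mem_cons_of_mem _ (d.edges_dropUntil_subset hwd he)
    obtain ⟨r, hr, hperm⟩ := aux_arc (Walk.cons h d) hk (d.dropUntil w hwd).reverse
      hB.reverse hwv hsub
    exact ⟨(d.dropUntil w hwd).reverse, r, hB.reverse, hr, hperm⟩

lemma aux_length_rotate {u v : V} (c : G.Walk v v) (h : u ∈ c.support) :
    (c.rotate _ h).length = c.length := by
  have := (c.rotate_edges _ h).perm.length_eq
  rwa [length_edges, length_edges] at this

lemma aux_odd_closed_walk : ∀ (n : ℕ) {u : V} (W : G.Walk u u), W.length = n → Odd n →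
    ∃ (x : V) (d : G.Walk x x), d.IsCycle ∧ Odd d.length ∧ ∀ e ∈ d.edges, e ∈ W.edges := by
  intro n
  induction n using Nat.strong_induction_on with
  | _ n ih =>
    intro u W hlen hodd
    by_cases hnd : W.support.tail.Nodup
    · cases W with
      | nil => subst hlen; simp [Nat.odd_iff] at hodd
      | cons h d =>
        rename_i x
        have hd : d.IsPath := by
          rw [isPath_def]
          rw [support_cons, List.tail_cons] at hnd
          exact hnd
        have hne : s(u,x) ∉ d.edges := by
          intro hmem
          have hmem' : s(u,x) ∈ d.reverse.edges := by
            rw [edges_reverse, List.mem_reverse]; exact hmem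
          obtain ⟨h', q, hq⟩ := aux_first_edge d.reverse hd.reverse hmem'
          have hqp : q.IsPath := by
            have := hd.reverse; rw [hq] at this; exact this.of_cons
          have : q = Walk.nil := (isPath_iff_eq_nil (p := q)).mp hqp
          subst this
          have : d.length = 1 := by
            have := congrArg Walk.length hq
            rwa [length_reverse, length_cons, length_nil] at this
          rw [length_cons, this] at hlen
          subst hlen
          simp [Nat.odd_iff] at hodd
        refine ⟨u, Walk.cons h d, ?_, hlen ▸ hodd, fun e he => he⟩
        exact (Walk.cons_isCycle_iff d h).mpr ⟨hd, hne⟩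
    · obtain ⟨x, hdup⟩ := List.exists_duplicate_iff_not_nodup.mpr hnd
      have hcount : 2 ≤ W.support.tail.count x := List.duplicate_iff_two_le_count.mp hdup
      have hxs : x ∈ W.support := List.mem_of_mem_tail hdup.mem
      set W' := W.rotate _ hxs with hW'
      have hlen' : W'.length = W.length := aux_length_rotate W hxs
      have hcount' : 2 ≤ W'.support.tail.count x := by
        rw [(W.support_rotate _ hxs).perm.count_eq x]
        exact hcount
      have hW'odd : Odd W'.length := by rw [hlen', hlen]; exact hodd
      clear_value W'
      clear hdup hcount hnd
      cases W' with
      | nil => simp [Nat.odd_iff] at hW'odd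
      | cons h' d' =>
        rename_i y
        rw [support_cons, List.tail_cons] at hcount'
        have hxd : x ∈ d'.support := List.count_pos_iff.mp (by omega)
        set tk := d'.takeUntil x hxd with htk
        set dr := d'.dropUntil x hxd with hdr
        have hspec := d'.take_spec hxd
        have hlensum : tk.length + dr.length = d'.length := by
          have := congrArg Walk.length hspec
          rwa [length_append] at this
        have htotal : d'.length + 1 = n := by
          rw [← hlen, ← hlen', length_cons]
        have hdrpos : 1 ≤ dr.length := by
          by_contra hno
          have hdr0 : dr.length = 0 := by omega
          have hdrnil : dr = Walk.nil := Walk.Nil.eq_nil (Walk.nil_iff_length_eq.mpr hdr0)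
          have hcnt1 : tk.support.count x = 1 := d'.count_support_takeUntil_eq_one hxd
          have hsupp := congrArg Walk.support hspec
          rw [support_append] at hsupp
          rw [← hsupp, List.count_append] at hcount'
          rw [← htk] at hcount'
          have : List.count x (d'.dropUntil x hxd).support.tail = 0 := by
            rw [← hdr, hdrnil]; simp
          omega
        have hmemW : ∀ e ∈ (Walk.cons h' d').edges, e ∈ W.edges := by
          intro e he
          rw [hW'] at he
          exact (W.rotate_edges _ hxs).perm.mem_iff.mp he
        have htke : ∀ e ∈ tk.edges, e ∈ d'.edges := d'.edges_takeUntil_subset hxd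
        have hdre : ∀ e ∈ dr.edges, e ∈ d'.edges := d'.edges_dropUntil_subset hxd
        have hparity : Odd (tk.length + 1) ∨ Odd dr.length := by
          rcases Nat.even_or_odd (tk.length + 1) with hev | hod
          · right
            rcases Nat.even_or_odd dr.length with h1 | h1
            · exfalso
              have ha := Nat.odd_iff.mp hodd
              have hb := Nat.even_iff.mp hev
              have hc := Nat.even_iff.mp h1
              omega
            · exact h1
          · left; exact hod
        rcases hparity with hod | hod
        · have hlt : (Walk.cons h' tk).length < n := by rw [length_cons]; omega
          obtain ⟨x', d'', hc, ho, hsub⟩ := ih _ hlt (Walk.cons h' tk) rfl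
            (by rw [length_cons]; exact hod)
          refine ⟨x', d'', hc, ho, fun e he => ?_⟩
          have := hsub e he
          rw [edges_cons, List.mem_cons] at this
          rcases this with rfl | h2
          · exact hmemW _ (by rw [edges_cons]; simp)
          · exact hmemW _ (by rw [edges_cons]; right; exact htke _ h2)
        · have hlt : dr.length < n := by omega
          obtain ⟨x', d'', hc, ho, hsub⟩ := ih _ hlt dr rfl hod
          refine ⟨x', d'', hc, ho, fun e he => ?_⟩
          exact hmemW _ (by rw [edges_cons]; right; exact hdre _ (hsub e he))

end Aux


open SimpleGraph Walk

/-- In any undirected graph, the family of odd cycles is uncrossable. -/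
theorem oddCycles_uncrossable (G : SimpleGraph V) :
    Uncrossable G {s | IsCycleEdges G s ∧ Odd s.card} := by
  rintro C₁ ⟨⟨u₁, c₁, hc₁, rfl⟩, hC₁odd⟩ C₂ ⟨⟨u₂, c₂, hc₂, rfl⟩, hC₂odd⟩ v w hvw P₂
    ⟨p₂, hp₂, rfl⟩ hP₂sub hinter hv hw
  have hnp₂ : ¬ p₂.Nil := Walk.not_nil_of_ne hvw
  have hp₂pos : 1 ≤ p₂.length := by
    rcases Nat.eq_zero_or_pos p₂.length with h0 | h1
    · exact absurd (Walk.nil_iff_length_eq.mpr h0) hnp₂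
    · exact h1
  -- v, w on c₁
  have hv' : v ∈ c₁.support := by
    obtain ⟨e, heC, hve⟩ := hv
    exact aux_mem_support_of_mem_edge c₁ (List.mem_toFinset.mp heC) hve
  set k₁ := c₁.rotate _ hv' with hk₁def
  have hk₁ : k₁.IsCycle := hc₁.rotate hv'
  have hperm₁ : k₁.edges.Perm c₁.edges := (c₁.rotate_edges _ hv').perm
  have hw' : w ∈ k₁.support := by
    obtain ⟨e, heC, hwe⟩ := hw
    exact aux_mem_support_of_mem_edge k₁ (hperm₁.mem_iff.mpr (List.mem_toFinset.mp heC)) hwe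
  obtain ⟨A, B, hA, hB, hpermAB₀⟩ := aux_arcs k₁ hk₁ hw' hvw.symm
  have hpermAB : (A.edges ++ B.edges).Perm c₁.edges := hpermAB₀.trans hperm₁
  -- v on c₂
  have hv₂ : v ∈ c₂.support := by
    obtain ⟨e, he, hve⟩ := aux_mem_edge_of_mem_support p₂ hnp₂ p₂.start_mem_support
    exact aux_mem_support_of_mem_edge c₂
      (List.mem_toFinset.mp (hP₂sub (List.mem_toFinset.mpr he))) hve
  set k₂ := c₂.rotate _ hv₂ with hk₂def
  have hk₂ : k₂.IsCycle := hc₂.rotate hv₂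
  have hperm₂ : k₂.edges.Perm c₂.edges := (c₂.rotate_edges _ hv₂).perm
  have hp₂sub' : ∀ e ∈ p₂.edges, e ∈ k₂.edges := fun e he =>
    hperm₂.mem_iff.mpr (List.mem_toFinset.mp (hP₂sub (List.mem_toFinset.mpr he)))
  obtain ⟨r₂, hr₂, hpermP₀⟩ := aux_arc k₂ hk₂ p₂ hp₂ hvw.symm hp₂sub'
  have hpermP : (p₂.edges ++ r₂.edges).Perm c₂.edges := hpermP₀.trans hperm₂
  have hndP : (p₂.edges ++ r₂.edges).Nodup := hpermP.nodup_iff.mpr hc₂.edges_nodup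
  -- cardinalities
  have hcard₁ : c₁.edges.toFinset.card = c₁.edges.length :=
    List.toFinset_card_of_nodup hc₁.edges_nodup
  have hcard₂ : c₂.edges.toFinset.card = c₂.edges.length :=
    List.toFinset_card_of_nodup hc₂.edges_nodup
  have hlen₁ : A.length + B.length = c₁.edges.length := by
    have := hpermAB.length_eq
    rwa [List.length_append, length_edges, length_edges] at this
  have hlen₂ : p₂.length + r₂.length = c₂.edges.length := by
    have := hpermP.length_eq
    rwa [List.length_append, length_edges, length_edges] at this
  have hoddAB : Odd (A.length + B.length) := by rw [hlen₁, ← hcard₁]; exact hC₁odd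
  have hoddPR : Odd (p₂.length + r₂.length) := by rw [hlen₂, ← hcard₂]; exact hC₂odd
  suffices H : ∀ (s : G.Walk v w) (t : G.Walk w v), s.IsPath → t.IsPath →
      (s.edges ++ t.edges).Perm c₁.edges → Odd (s.length + p₂.length) →
      ∃ P₁ : Finset (Sym2 V), IsPathEdges G v w P₁ ∧ P₁ ⊆ c₁.edges.toFinset ∧
        (P₁ ∪ p₂.edges.toFinset) ∈ {s | IsCycleEdges G s ∧ Odd s.card} ∧
        ∃ C ∈ {s | IsCycleEdges G s ∧ Odd s.card},
          C ⊆ (c₁.edges.toFinset \ P₁) ∪ (c₂.edges.toFinset \ p₂.edges.toFinset) by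
    by_cases h1 : Odd (A.length + p₂.length)
    · exact H A B hA hB hpermAB h1
    · refine H B.reverse A.reverse hB.reverse hA.reverse ?_ ?_
      · rw [edges_reverse, edges_reverse]
        exact ((B.edges.reverse_perm).append (A.edges.reverse_perm)).trans
          (List.perm_append_comm.trans hpermAB)
      · rw [length_reverse]
        rw [Nat.odd_iff] at hoddAB ⊢
        rw [Nat.odd_iff] at h1
        omega
  intro s t hs ht hperm hodd
  have hnds : (s.edges ++ t.edges).Nodup := hperm.nodup_iff.mpr hc₁.edges_nodup
  have hC1eq : c₁.edges.toFinset = s.edges.toFinset ∪ t.edges.toFinset := by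
    rw [← List.toFinset_append]
    exact (List.toFinset_eq_of_perm _ _ hperm).symm
  have hns : ¬ s.Nil := Walk.not_nil_of_ne hvw
  have hspos : 1 ≤ s.length := by
    rcases Nat.eq_zero_or_pos s.length with h0 | h1
    · exact absurd (Walk.nil_iff_length_eq.mpr h0) hns
    · exact h1
  -- membership in edgeVerts
  have hmemC₁ : ∀ x ∈ s.support, x ∈ edgeVerts c₁.edges.toFinset := by
    intro x hx
    obtain ⟨e, he, hxe⟩ := aux_mem_edge_of_mem_support s hns hx
    exact ⟨e, List.mem_toFinset.mpr (hperm.subset (List.mem_append_left _ he)), hxe⟩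
  have hmemP₂ : ∀ x ∈ p₂.support, x ∈ edgeVerts p₂.edges.toFinset := by
    intro x hx
    obtain ⟨e, he, hxe⟩ := aux_mem_edge_of_mem_support p₂ hnp₂ hx
    exact ⟨e, List.mem_toFinset.mpr he, hxe⟩
  -- edge disjointness of s and p₂
  have hdisjE : ∀ e, e ∈ s.edges → e ∈ p₂.edges → False := by
    intro e hes hep
    have hevw : e = s(v,w) := by
      induction e using Sym2.ind with
      | _ a b =>
        have hne : a ≠ b := by
          have := G.not_isDiag_of_mem_edgeSet (s.edges_subset_edgeSet hes)
          simpa using this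
        have ha : a ∈ ({v, w} : Set V) := hinter
          ⟨⟨s(a,b), List.mem_toFinset.mpr hep, by simp⟩,
           ⟨s(a,b), List.mem_toFinset.mpr (hperm.subset (List.mem_append_left _ hes)), by simp⟩⟩
        have hb : b ∈ ({v, w} : Set V) := hinter
          ⟨⟨s(a,b), List.mem_toFinset.mpr hep, by simp⟩,
           ⟨s(a,b), List.mem_toFinset.mpr (hperm.subset (List.mem_append_left _ hes)), by simp⟩⟩
        simp only [Set.mem_insert_iff, Set.mem_singleton_iff] at ha hb
        rcases ha with rfl | rfl <;> rcases hb with rfl | rfl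
        · exact absurd rfl hne
        · rfl
        · exact Sym2.eq_swap
        · exact absurd rfl hne
    subst hevw
    obtain ⟨hadj, q, hq⟩ := aux_first_edge s hs hes
    have hqnil : q = Walk.nil := (isPath_iff_eq_nil (p := q)).mp (by
      have := hs; rw [hq] at this; exact this.of_cons)
    have hslen : s.length = 1 := by
      have := congrArg Walk.length hq
      rwa [length_cons, hqnil, length_nil] at this
    obtain ⟨hadj', q', hq'⟩ := aux_first_edge p₂ hp₂ hep
    have hqnil' : q' = Walk.nil := (isPath_iff_eq_nil (p := q')).mp (by
      have := hp₂; rw [hq'] at this; exact this.of_cons)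
    have hplen : p₂.length = 1 := by
      have := congrArg Walk.length hq'
      rwa [length_cons, hqnil', length_nil] at this
    rw [hslen, hplen, Nat.odd_iff] at hodd
    omega
  -- the new cycle
  set κ := s.append p₂.reverse with hκdef
  have hκedges : κ.edges = s.edges ++ p₂.edges.reverse := by
    rw [hκdef, edges_append, edges_reverse]
  have hκnodup : κ.edges.Nodup := by
    rw [hκedges]
    rw [List.nodup_append]
    exact ⟨hs.edges_nodup, by rw [List.nodup_reverse]; exact hp₂.edges_nodup,
      fun e he e' he' hee => hdisjE e he (List.mem_reverse.mp (hee ▸ he'))⟩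
  have hκlen : κ.length = s.length + p₂.length := by
    rw [hκdef, length_append, length_reverse]
  have hκcyc : κ.IsCycle := by
    rw [isCycle_def]
    refine ⟨⟨hκnodup⟩, ?_, ?_⟩
    · intro hnil
      have := congrArg Walk.length hnil
      rw [hκlen, length_nil] at this
      omega
    · rw [hκdef, tail_support_append, List.nodup_append]
      have hsn := hs.support_nodup
      rw [s.support_eq_cons, List.nodup_cons] at hsn
      have hpn := hp₂.reverse.support_nodup
      rw [p₂.reverse.support_eq_cons, List.nodup_cons] at hpn
      refine ⟨hsn.2, hpn.2, ?_⟩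
      intro x hx1 y hx2 hxy
      subst hxy
      have hxs : x ∈ s.support := by rw [s.support_eq_cons]; exact List.mem_cons_of_mem _ hx1
      have hxp : x ∈ p₂.support := by
        have : x ∈ p₂.reverse.support := by
          rw [p₂.reverse.support_eq_cons]; exact List.mem_cons_of_mem _ hx2
        rwa [support_reverse, List.mem_reverse] at this
      have hxvw : x ∈ ({v, w} : Set V) := hinter ⟨hmemP₂ x hxp, hmemC₁ x hxs⟩
      simp only [Set.mem_insert_iff, Set.mem_singleton_iff] at hxvw
      rcases hxvw with rfl | rfl
      · exact hsn.1 hx1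
      · exact hpn.1 hx2
  have hκfin : κ.edges.toFinset = s.edges.toFinset ∪ p₂.edges.toFinset := by
    rw [hκedges, List.toFinset_append, List.toFinset_reverse]
  refine ⟨s.edges.toFinset, ⟨s, hs, rfl⟩, by rw [hC1eq]; exact Finset.subset_union_left,
    ⟨⟨v, κ, hκcyc, hκfin⟩, ?_⟩, ?_⟩
  · rw [← hκfin, List.toFinset_card_of_nodup hκnodup, length_edges, hκlen]
    exact hodd
  · -- the odd closed walk on the complements
    set W := t.append r₂.reverse with hWdef
    have hWlen : W.length = t.length + r₂.length := by
      rw [hWdef, length_append, length_reverse]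
    have hWodd : Odd W.length := by
      rw [hWlen]
      have h1 : Odd (s.length + t.length) := by
        have := hperm.length_eq
        rw [List.length_append, length_edges, length_edges] at this
        rw [this, ← hcard₁]; exact hC₁odd
      rw [Nat.odd_iff] at h1 hoddPR hodd ⊢
      omega
    obtain ⟨x', d'', hcyc'', hodd'', hsub''⟩ := aux_odd_closed_walk W.length W rfl hWodd
    refine ⟨d''.edges.toFinset, ⟨⟨x', d'', hcyc'', rfl⟩, ?_⟩, ?_⟩
    · rw [List.toFinset_card_of_nodup hcyc''.edges_nodup, length_edges]
      exact hodd''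
    · intro e he
      have heW : e ∈ W.edges := hsub'' e (List.mem_toFinset.mp he)
      rw [hWdef, edges_append, edges_reverse, List.mem_append] at heW
      rw [Finset.mem_union, Finset.mem_sdiff, Finset.mem_sdiff]
      rcases heW with het | her
      · left
        refine ⟨List.mem_toFinset.mpr (hperm.subset (List.mem_append_right _ het)), ?_⟩
        intro hes
        exact (List.disjoint_of_nodup_append hnds) (List.mem_toFinset.mp hes) het
      · right
        rw [List.mem_reverse] at her
        refine ⟨List.mem_toFinset.mpr (hpermP.subset (List.mem_append_right _ her)), ?_⟩
        intro hep
        exact (List.disjoint_of_nodup_append hndP) (List.mem_toFinset.mp hep) her
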